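/- The conditional second moment of the standardized outcome given selection satisfies ∫_{-∞}^{∞} z(y)² · (1/(σ Φ(μ₂))) φ(z(y)) Φ(ζ(y)) dy = 1 − μ₂ ρ² φ(μ₂)/Φ(μ₂). -/

import Mathlib

open MeasureTheory Set

/-- Standard normal density. -/
noncomputable def phi (t : ℝ) : ℝ := Real.exp (-(t ^ 2) / 2) / Real.sqrt (2 * Real.pi)

/-- Standard normal cumulative distribution function. -/
noncomputable def Phi (x : ℝ) : ℝ := ∫ t in Set.Iic x, phi t

open Filter Real

lemma sqrt2pi_pos : 0 < Real.sqrt (2 * Real.pi) :=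
  Real.sqrt_pos.2 (by positivity)

lemma phi_pos (t : ℝ) : 0 < phi t := div_pos (Real.exp_pos _) sqrt2pi_pos

lemma phi_nonneg (t : ℝ) : 0 ≤ phi t := (phi_pos t).le

lemma phi_le (t : ℝ) : phi t ≤ (Real.sqrt (2 * Real.pi))⁻¹ := by
  rw [phi, div_eq_mul_inv]
  nlinarith [Real.exp_le_one_iff.2 (by nlinarith [sq_nonneg t] : -(t^2)/2 ≤ 0),
    (inv_pos.2 sqrt2pi_pos).le, Real.exp_pos (-(t^2)/2)]

lemma continuous_phi : Continuous phi := by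
  unfold phi; fun_prop

lemma hasDerivAt_phi (t : ℝ) : HasDerivAt phi (-t * phi t) t := by
  have h : HasDerivAt (fun t : ℝ => Real.exp (-(t ^ 2) / 2)) (-t * Real.exp (-(t^2)/2)) t := by
    have h1 : HasDerivAt (fun t : ℝ => -(t ^ 2) / 2) (-t) t := by
      have := ((hasDerivAt_pow 2 t).neg).div_const 2
      simpa using this.congr_deriv (by ring)
    simpa [mul_comm, Function.comp_def] using (Real.hasDerivAt_exp _).comp t h1
  have := h.div_const (Real.sqrt (2 * Real.pi))
  rw [show (-t * phi t) = -t * Real.exp (-(t^2)/2) / Real.sqrt (2*Real.pi) by simp only [phi]; ring]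
  exact this

-- key elementary bound: 2√c|z| ≤ exp(c z²)
lemma two_sqrt_abs_le (c z : ℝ) (hc : 0 < c) : 2 * Real.sqrt c * |z| ≤ Real.exp (c * z^2) := by
  have h1 : 2 * Real.sqrt c * |z| ≤ 1 + c * z^2 := by
    nlinarith [sq_nonneg (1 - Real.sqrt c * |z|), Real.sq_sqrt hc.le, sq_abs z]
  exact h1.trans (by nlinarith [Real.add_one_le_exp (c * z^2)])

lemma abs_le_exp_sq (c z : ℝ) (hc : 0 < c) : |z| ≤ (2 * Real.sqrt c)⁻¹ * Real.exp (c * z^2) := by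
  rw [le_inv_mul_iff₀ (by positivity)]
  exact two_sqrt_abs_le c z hc

lemma sq_le_exp_sq (c z : ℝ) (hc : 0 < c) : z^2 ≤ (4 * c)⁻¹ * Real.exp (2 * c * z^2) := by
  have h := abs_le_exp_sq c z hc
  have h2 : |z|^2 ≤ ((2 * Real.sqrt c)⁻¹ * Real.exp (c * z^2))^2 :=
    pow_le_pow_left₀ (abs_nonneg z) h 2
  have hs : Real.sqrt c ^ 2 = c := Real.sq_sqrt hc.le
  rw [sq_abs] at h2
  calc z^2 ≤ ((2 * Real.sqrt c)⁻¹)^2 * Real.exp (c * z^2)^2 := by rw [← mul_pow]; exact h2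
    _ = (4 * c)⁻¹ * Real.exp (2 * c * z^2) := by
        rw [sq (Real.exp _), ← Real.exp_add]
        have : ((2 * Real.sqrt c)⁻¹)^2 = (4*c)⁻¹ := by
          rw [inv_pow, mul_pow, Real.sq_sqrt hc.le]; norm_num
        rw [this]; ring_nf


section Part2
variable {k : ℝ}

lemma exp_k_pos (k z : ℝ) : 0 < Real.exp (-(k/2) * z^2) := Real.exp_pos _

lemma abs_mul_exp_le (hk : 0 < k) (z : ℝ) :
    |z * Real.exp (-(k/2) * z^2)| ≤ (2 * Real.sqrt (k/4))⁻¹ * Real.exp (-(k/4) * z^2) := by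
  have h := abs_le_exp_sq (k/4) z (by positivity)
  rw [abs_mul, abs_of_pos (exp_k_pos k z)]
  have : |z| * Real.exp (-(k/2) * z^2)
      ≤ ((2 * Real.sqrt (k/4))⁻¹ * Real.exp (k/4 * z^2)) * Real.exp (-(k/2) * z^2) :=
    mul_le_mul_of_nonneg_right h (Real.exp_nonneg _)
  refine this.trans (le_of_eq ?_)
  rw [mul_assoc, ← Real.exp_add]
  ring_nf

lemma sq_mul_exp_le (hk : 0 < k) (z : ℝ) :
    z^2 * Real.exp (-(k/2) * z^2) ≤ (k/2)⁻¹ * Real.exp (-(k/4) * z^2) := by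
  have h := sq_le_exp_sq (k/8) z (by positivity)
  have : z^2 * Real.exp (-(k/2) * z^2)
      ≤ ((4 * (k/8))⁻¹ * Real.exp (2 * (k/8) * z^2)) * Real.exp (-(k/2) * z^2) :=
    mul_le_mul_of_nonneg_right h (Real.exp_nonneg _)
  refine this.trans (le_of_eq ?_)
  rw [mul_assoc, ← Real.exp_add]
  norm_num
  ring_nf

lemma integrable_exp_k (hk : 0 < k) : Integrable (fun z : ℝ => Real.exp (-(k/2) * z^2)) := by
  simpa using integrable_exp_neg_mul_sq (show (0:ℝ) < k/2 by positivity)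

lemma integrable_mul_exp_k (hk : 0 < k) : Integrable (fun z : ℝ => z * Real.exp (-(k/2) * z^2)) := by
  refine ((integrable_exp_neg_mul_sq (show (0:ℝ) < k/4 by positivity)).const_mul
    ((2 * Real.sqrt (k/4))⁻¹)).mono
    (Continuous.aestronglyMeasurable (by continuity)) (Filter.Eventually.of_forall fun z => ?_)
  have := abs_mul_exp_le hk z
  rw [Real.norm_eq_abs, Real.norm_eq_abs]
  exact this.trans (le_abs_self _)

lemma integrable_sq_mul_exp_k (hk : 0 < k) :
    Integrable (fun z : ℝ => z^2 * Real.exp (-(k/2) * z^2)) := by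
  refine ((integrable_exp_neg_mul_sq (show (0:ℝ) < k/4 by positivity)).const_mul
    ((k/2)⁻¹)).mono
    (Continuous.aestronglyMeasurable (by continuity)) (Filter.Eventually.of_forall fun z => ?_)
  have := sq_mul_exp_le hk z
  rw [Real.norm_eq_abs, Real.norm_eq_abs, abs_of_nonneg (by positivity)]
  exact this.trans (le_abs_self _)

lemma tendsto_exp_k_atTop (hk : 0 < k) :
    Filter.Tendsto (fun z : ℝ => Real.exp (-(k/4) * z^2)) atTop (nhds 0) := by
  apply Real.tendsto_exp_atBot.comp
  apply Filter.Tendsto.const_mul_atTop_of_neg (by linarith : -(k/4) < 0)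
  simpa using (tendsto_pow_atTop (n := 2) (by norm_num))

lemma tendsto_exp_k_atBot (hk : 0 < k) :
    Filter.Tendsto (fun z : ℝ => Real.exp (-(k/4) * z^2)) atBot (nhds 0) := by
  apply Real.tendsto_exp_atBot.comp
  apply Filter.Tendsto.const_mul_atTop_of_neg (by linarith : -(k/4) < 0)
  have h1 : Filter.Tendsto (fun z : ℝ => |z|) atBot atTop := tendsto_abs_atBot_atTop
  have h2 : ∀ z : ℝ, |z|^2 = z^2 := fun z => sq_abs z
  have h3 := (tendsto_pow_atTop (n := 2) (by norm_num)).comp h1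
  exact h3.congr (fun z => by simp [Function.comp, sq_abs])

lemma tendsto_mul_exp_k (hk : 0 < k) (l : Filter ℝ)
    (hl : Filter.Tendsto (fun z : ℝ => Real.exp (-(k/4) * z^2)) l (nhds 0)) :
    Filter.Tendsto (fun z : ℝ => z * Real.exp (-(k/2) * z^2)) l (nhds 0) := by
  apply squeeze_zero_norm (fun z => (abs_mul_exp_le hk z).trans (le_of_eq rfl))
  simpa using hl.const_mul ((2 * Real.sqrt (k/4))⁻¹)

lemma integral_exp_k (hk : 0 < k) :
    ∫ z : ℝ, Real.exp (-(k/2) * z^2) = Real.sqrt (2 * Real.pi / k) := by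
  rw [show 2 * Real.pi / k = Real.pi / (k/2) by ring]
  exact integral_gaussian (k/2)

lemma integral_mul_exp_k (hk : 0 < k) : ∫ z : ℝ, z * Real.exp (-(k/2) * z^2) = 0 := by
  have h : (∫ z : ℝ, z * Real.exp (-(k/2) * z^2)) = ∫ z : ℝ, -(z * Real.exp (-(k/2) * z^2)) := by
    conv_lhs => rw [← MeasureTheory.integral_neg_eq_self
      (fun z : ℝ => z * Real.exp (-(k/2) * z^2)) volume]
    congr 1
    funext x
    simp [neg_sq]
  rw [MeasureTheory.integral_neg] at h
  linarith

lemma integral_sq_mul_exp_k (hk : 0 < k) :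
    ∫ z : ℝ, z^2 * Real.exp (-(k/2) * z^2) = Real.sqrt (2 * Real.pi / k) / k := by
  set f : ℝ → ℝ := fun u => -(u/k) * Real.exp (-(k/2) * u^2) with hf
  set f' : ℝ → ℝ := fun u => u^2 * Real.exp (-(k/2) * u^2) - (1/k) * Real.exp (-(k/2) * u^2)
    with hf'
  have hderiv : ∀ u : ℝ, HasDerivAt f (f' u) u := by
    intro u
    have h1 : HasDerivAt (fun u : ℝ => -(u/k)) (-(1/k)) u := by
      simpa using ((hasDerivAt_id u).div_const k).fun_neg
    have h2 : HasDerivAt (fun u : ℝ => Real.exp (-(k/2) * u^2)) (-(k/2) * (2*u) * Real.exp (-(k/2) * u^2)) u := by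
      have h3 : HasDerivAt (fun u : ℝ => -(k/2) * u^2) (-(k/2) * (2*u)) u := by
        simpa using (hasDerivAt_pow 2 u).const_mul (-(k/2))
      simpa [mul_comm, Function.comp_def] using (Real.hasDerivAt_exp _).comp u h3
    have := h1.fun_mul h2
    refine this.congr_deriv ?_
    simp only [hf']
    field_simp
    ring
  have hint : Integrable f' :=
    (integrable_sq_mul_exp_k hk).sub ((integrable_exp_k hk).const_mul (1/k))
  have htop : Filter.Tendsto f atTop (nhds 0) := by
    have := (tendsto_mul_exp_k hk atTop (tendsto_exp_k_atTop hk)).const_mul (-(1/k))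
    simpa [hf, mul_assoc] using this.congr (fun z => by ring)
  have hbot : Filter.Tendsto f atBot (nhds 0) := by
    have := (tendsto_mul_exp_k hk atBot (tendsto_exp_k_atBot hk)).const_mul (-(1/k))
    simpa [hf, mul_assoc] using this.congr (fun z => by ring)
  have h0 : ∫ u, f' u = 0 - 0 :=
    MeasureTheory.integral_of_hasDerivAt_of_tendsto hderiv hint hbot htop
  rw [sub_zero] at h0
  have hsplit : ∫ u, f' u = (∫ z : ℝ, z^2 * Real.exp (-(k/2) * z^2))
      - ∫ z : ℝ, (1/k) * Real.exp (-(k/2) * z^2) :=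
    MeasureTheory.integral_sub (integrable_sq_mul_exp_k hk) ((integrable_exp_k hk).const_mul (1/k))
  rw [hsplit, MeasureTheory.integral_const_mul, integral_exp_k hk] at h0
  have hk' : k ≠ 0 := ne_of_gt hk
  rw [sub_eq_zero] at h0
  rw [h0]
  ring

end Part2

section Part3
variable {k : ℝ}

lemma integral_exp_shift (hk : 0 < k) (m : ℝ) :
    ∫ z : ℝ, Real.exp (-(k/2) * (z + m)^2) = Real.sqrt (2 * Real.pi / k) := by
  rw [MeasureTheory.integral_add_right_eq_self (fun x : ℝ => Real.exp (-(k/2) * x^2)) m]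
  exact integral_exp_k hk

lemma integral_mul_exp_shift (hk : 0 < k) (m : ℝ) :
    ∫ z : ℝ, z * Real.exp (-(k/2) * (z + m)^2) = -m * Real.sqrt (2 * Real.pi / k) := by
  have h1 : ∀ z : ℝ, z * Real.exp (-(k/2) * (z + m)^2)
      = (z + m) * Real.exp (-(k/2) * (z + m)^2) - m * Real.exp (-(k/2) * (z + m)^2) := by
    intro z; ring
  rw [MeasureTheory.integral_congr_ae (Filter.Eventually.of_forall h1),
    MeasureTheory.integral_sub, MeasureTheory.integral_add_right_eq_self
      (fun x : ℝ => x * Real.exp (-(k/2) * x^2)) m, integral_mul_exp_k hk]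
  · rw [MeasureTheory.integral_const_mul,
      MeasureTheory.integral_add_right_eq_self (fun x : ℝ => Real.exp (-(k/2) * x^2)) m,
      integral_exp_k hk]
    ring
  · exact (integrable_mul_exp_k hk).comp_add_right m
  · exact ((integrable_exp_k hk).comp_add_right m).const_mul m

lemma integral_sq_mul_exp_shift (hk : 0 < k) (m : ℝ) :
    ∫ z : ℝ, z^2 * Real.exp (-(k/2) * (z + m)^2)
      = Real.sqrt (2 * Real.pi / k) * (m^2 + 1/k) := by
  have h1 : ∀ z : ℝ, z^2 * Real.exp (-(k/2) * (z + m)^2)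
      = ((z+m)^2 * Real.exp (-(k/2) * (z + m)^2)
        - (2*m) * ((z+m) * Real.exp (-(k/2) * (z + m)^2)))
        + m^2 * Real.exp (-(k/2) * (z + m)^2) := by
    intro z; ring
  have i1 : Integrable (fun z : ℝ => (z+m)^2 * Real.exp (-(k/2) * (z + m)^2)) :=
    (integrable_sq_mul_exp_k hk).comp_add_right m
  have i2 : Integrable (fun z : ℝ => (z+m) * Real.exp (-(k/2) * (z + m)^2)) :=
    (integrable_mul_exp_k hk).comp_add_right m
  have i3 : Integrable (fun z : ℝ => Real.exp (-(k/2) * (z + m)^2)) :=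
    (integrable_exp_k hk).comp_add_right m
  rw [MeasureTheory.integral_congr_ae (Filter.Eventually.of_forall h1),
    MeasureTheory.integral_add
      (f := fun z : ℝ => (z+m)^2 * Real.exp (-(k/2) * (z + m)^2)
        - (2*m) * ((z+m) * Real.exp (-(k/2) * (z + m)^2)))
      (g := fun z : ℝ => m^2 * Real.exp (-(k/2) * (z + m)^2))
      (by exact i1.sub (i2.const_mul (2*m))) (i3.const_mul (m^2)),
    MeasureTheory.integral_sub i1 (i2.const_mul (2*m)),
    MeasureTheory.integral_const_mul, MeasureTheory.integral_const_mul,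
    MeasureTheory.integral_add_right_eq_self (fun x : ℝ => x^2 * Real.exp (-(k/2) * x^2)) m,
    MeasureTheory.integral_add_right_eq_self (fun x : ℝ => x * Real.exp (-(k/2) * x^2)) m,
    MeasureTheory.integral_add_right_eq_self (fun x : ℝ => Real.exp (-(k/2) * x^2)) m,
    integral_sq_mul_exp_k hk, integral_mul_exp_k hk, integral_exp_k hk]
  ring

-- Phi facts
lemma integrable_phi : Integrable phi := by
  have h : Integrable (fun z : ℝ => Real.exp (-(1/2 : ℝ) * z^2)) :=
    integrable_exp_neg_mul_sq (by norm_num)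
  refine (h.div_const (Real.sqrt (2 * Real.pi))).congr (Filter.Eventually.of_forall fun z => ?_)
  simp [phi]
  ring_nf

lemma integral_phi : ∫ t, phi t = 1 := by
  have h : ∀ t : ℝ, phi t = Real.exp (-(1/2 : ℝ) * t^2) / Real.sqrt (2 * Real.pi) := by
    intro t; simp [phi]; ring_nf
  rw [MeasureTheory.integral_congr_ae (Filter.Eventually.of_forall h), MeasureTheory.integral_div]
  rw [show ∫ t : ℝ, Real.exp (-(1/2 : ℝ) * t^2) = Real.sqrt (2 * Real.pi / 1) by
    exact integral_exp_k one_pos]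
  rw [div_one]
  exact div_self (ne_of_gt sqrt2pi_pos)

lemma Phi_nonneg (x : ℝ) : 0 ≤ Phi x :=
  MeasureTheory.setIntegral_nonneg measurableSet_Iic fun t _ => phi_nonneg t

lemma Phi_le_one (x : ℝ) : Phi x ≤ 1 := by
  rw [← integral_phi]
  exact MeasureTheory.setIntegral_le_integral integrable_phi
    (Filter.Eventually.of_forall fun t => phi_nonneg t)

lemma Phi_pos (x : ℝ) : 0 < Phi x := by
  rw [Phi, MeasureTheory.setIntegral_pos_iff_support_of_nonneg_ae
    (Filter.Eventually.of_forall fun t => phi_nonneg t) integrable_phi.integrableOn]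
  have hsupp : Function.support phi = Set.univ := by
    ext t; simp [Function.mem_support, ne_of_gt (phi_pos t)]
  rw [hsupp, Set.univ_inter]
  simp [Real.volume_Iic]

lemma Phi_sub (x y : ℝ) : Phi y - Phi x = ∫ t in x..y, phi t :=
  intervalIntegral.integral_Iic_sub_Iic integrable_phi.integrableOn integrable_phi.integrableOn

lemma hasDerivAt_Phi (x : ℝ) : HasDerivAt Phi (phi x) x := by
  have h : ∀ y : ℝ, Phi y = Phi 0 + ∫ t in (0:ℝ)..y, phi t := by
    intro y
    have := Phi_sub 0 y
    linarith
  have hd : HasDerivAt (fun y : ℝ => Phi 0 + ∫ t in (0:ℝ)..y, phi t) (phi x) x := by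
    refine (HasDerivAt.const_add _ ?_)
    exact intervalIntegral.integral_hasDerivAt_right
      integrable_phi.intervalIntegrable
      (continuous_phi.stronglyMeasurableAtFilter _ _)
      continuous_phi.continuousAt
  exact hd.congr_of_eventuallyEq (Filter.Eventually.of_forall h)

lemma continuous_Phi : Continuous Phi := by
  have : Differentiable ℝ Phi := fun x => (hasDerivAt_Phi x).differentiableAt
  exact this.continuous

lemma tendsto_Phi_atBot : Filter.Tendsto Phi atBot (nhds 0) := by
  have heq : ∀ x : ℝ, Phi x = ∫ t, Set.indicator (Set.Iic x) phi t := by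
    intro x
    rw [MeasureTheory.integral_indicator measurableSet_Iic]
    rfl
  have h0 : (0 : ℝ) = ∫ t : ℝ, (0 : ℝ) := by simp
  rw [show nhds (0:ℝ) = nhds (∫ t : ℝ, (0:ℝ)) by rw [← h0]]
  refine Filter.Tendsto.congr (fun x => (heq x).symm) ?_
  refine MeasureTheory.tendsto_integral_filter_of_dominated_convergence phi ?_ ?_ integrable_phi ?_
  · exact Filter.Eventually.of_forall fun x =>
      (continuous_phi.aestronglyMeasurable).indicator measurableSet_Iic
  · exact Filter.Eventually.of_forall fun x =>
      Filter.Eventually.of_forall fun t => by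
        rw [Real.norm_eq_abs, abs_of_nonneg (Set.indicator_nonneg (fun s _ => phi_nonneg s) t)]
        exact Set.indicator_le_self' (fun s _ => phi_nonneg s) t
  · refine Filter.Eventually.of_forall fun t => ?_
    have hev : ∀ᶠ x in (atBot : Filter ℝ), Set.indicator (Set.Iic x) phi t = 0 := by
      filter_upwards [Filter.eventually_lt_atBot t] with x hx
      exact Set.indicator_of_notMem (by simpa using not_le.2 hx) phi
    exact (tendsto_const_nhds.congr' (hev.mono fun x hx => hx.symm))

end Part3

section Part4

lemma k_pos (b : ℝ) : 0 < 1 + b^2 := by positivity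

lemma sqrt_k_pos (b : ℝ) : 0 < Real.sqrt (1 + b^2) := Real.sqrt_pos.2 (k_pos b)

lemma gauss_prod (a b z : ℝ) :
    phi z * phi (a + b*z) = phi (a / Real.sqrt (1+b^2)) *
      ((Real.sqrt (2*Real.pi))⁻¹ *
        Real.exp (-((1+b^2)/2) * (z + a*b/(1+b^2))^2)) := by
  have hk : (0:ℝ) < 1 + b^2 := k_pos b
  have hc : (a / Real.sqrt (1+b^2))^2 = a^2 / (1+b^2) := by
    rw [div_pow, Real.sq_sqrt hk.le]
  have hs : Real.sqrt (2*Real.pi) ≠ 0 := ne_of_gt sqrt2pi_pos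
  have expEq : (-(z^2)/2) + (-((a+b*z)^2)/2)
      = (-(a^2/(1+b^2))/2) + (-((1+b^2)/2) * (z + a*b/(1+b^2))^2) := by
    field_simp
    ring
  simp only [phi, hc]
  rw [div_mul_div_comm, ← Real.exp_add, expEq, Real.exp_add]
  field_simp

lemma integrable_phi_mul_phi (a b : ℝ) : Integrable (fun z => phi z * phi (a + b*z)) := by
  refine (integrable_phi.mul_const ((Real.sqrt (2*Real.pi))⁻¹)).mono
    (Continuous.aestronglyMeasurable (by unfold phi; fun_prop))
    (Filter.Eventually.of_forall fun z => ?_)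
  rw [Real.norm_eq_abs, Real.norm_eq_abs,
    abs_of_nonneg (mul_nonneg (phi_nonneg _) (phi_nonneg _)),
    abs_of_nonneg (mul_nonneg (phi_nonneg _) (inv_nonneg.2 sqrt2pi_pos.le))]
  exact mul_le_mul_of_nonneg_left (phi_le _) (phi_nonneg z)

lemma integral_phi_mul_phi (a b : ℝ) :
    ∫ z : ℝ, phi z * phi (a + b*z)
      = phi (a / Real.sqrt (1+b^2)) / Real.sqrt (1+b^2) := by
  have hk : (0:ℝ) < 1 + b^2 := k_pos b
  rw [MeasureTheory.integral_congr_ae (Filter.Eventually.of_forall (gauss_prod a b)),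
    MeasureTheory.integral_const_mul, MeasureTheory.integral_const_mul,
    integral_exp_shift hk (a*b/(1+b^2))]
  rw [Real.sqrt_div (by positivity : (0:ℝ) ≤ 2*Real.pi) (1+b^2)]
  rw [show (Real.sqrt (2*Real.pi))⁻¹ * (Real.sqrt (2*Real.pi) / Real.sqrt (1+b^2))
      = (Real.sqrt (1+b^2))⁻¹ by
    field_simp]
  rw [div_eq_mul_inv (phi (a / Real.sqrt (1+b^2))) (Real.sqrt (1+b^2))]

lemma integrable_phi_mul_Phi (a b : ℝ) : Integrable (fun z => phi z * Phi (a + b*z)) := by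
  refine integrable_phi.mono
    (Continuous.aestronglyMeasurable (continuous_phi.mul
      (continuous_Phi.comp (by continuity))))
    (Filter.Eventually.of_forall fun z => ?_)
  rw [Real.norm_eq_abs, Real.norm_eq_abs, abs_of_nonneg
    (mul_nonneg (phi_nonneg z) (Phi_nonneg _)), abs_of_nonneg (phi_nonneg z)]
  calc phi z * Phi (a + b*z) ≤ phi z * 1 :=
        mul_le_mul_of_nonneg_left (Phi_le_one _) (phi_nonneg z)
    _ = phi z := mul_one _

lemma integral_phi_mul_Phi (a b : ℝ) :
    ∫ z : ℝ, phi z * Phi (a + b*z) = Phi (a / Real.sqrt (1+b^2)) := by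
  have hk : (0:ℝ) < 1 + b^2 := k_pos b
  have hsk : (0:ℝ) < Real.sqrt (1+b^2) := sqrt_k_pos b
  set g : ℝ → ℝ := fun x => ∫ z : ℝ, phi z * Phi (x + b*z) with hg
  set h : ℝ → ℝ := fun x => Phi (x / Real.sqrt (1+b^2)) with hh
  -- derivative of g
  have hgd : ∀ x₀ : ℝ, HasDerivAt g (phi (x₀ / Real.sqrt (1+b^2)) / Real.sqrt (1+b^2)) x₀ := by
    intro x₀
    have key := hasDerivAt_integral_of_dominated_loc_of_deriv_le (μ := volume)
      (F := fun x z => phi z * Phi (x + b*z)) (F' := fun x z => phi z * phi (x + b*z))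
      (x₀ := x₀) (s := Metric.ball x₀ 1) (bound := fun z => phi z * (Real.sqrt (2*Real.pi))⁻¹)
      (Metric.ball_mem_nhds x₀ one_pos)
      (Filter.Eventually.of_forall fun x => Continuous.aestronglyMeasurable
        (continuous_phi.mul (continuous_Phi.comp (by continuity))))
      (integrable_phi_mul_Phi x₀ b)
      (Continuous.aestronglyMeasurable (by unfold phi; fun_prop))
      (Filter.Eventually.of_forall fun z => fun x _ => by
        rw [Real.norm_eq_abs, abs_of_nonneg (mul_nonneg (phi_nonneg z) (phi_nonneg _))]
        exact mul_le_mul_of_nonneg_left (phi_le _) (phi_nonneg z))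
      (integrable_phi.mul_const _)
      (Filter.Eventually.of_forall fun z => fun x _ => by
        have h1 : HasDerivAt (fun x : ℝ => x + b*z) 1 x := (hasDerivAt_id x).add_const (b*z)
        have h2 := (hasDerivAt_Phi (x + b*z)).comp x h1
        simpa using h2.const_mul (phi z))
    rw [← integral_phi_mul_phi x₀ b]
    exact key.2
  -- derivative of h
  have hhd : ∀ x₀ : ℝ, HasDerivAt h (phi (x₀ / Real.sqrt (1+b^2)) / Real.sqrt (1+b^2)) x₀ := by
    intro x₀
    have h1 : HasDerivAt (fun x : ℝ => x / Real.sqrt (1+b^2)) (1 / Real.sqrt (1+b^2)) x₀ := by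
      simpa using (hasDerivAt_id x₀).div_const (Real.sqrt (1+b^2))
    have h2 := (hasDerivAt_Phi (x₀ / Real.sqrt (1+b^2))).comp x₀ h1
    simpa [hh, div_eq_mul_inv, mul_comm, Function.comp_def] using h2
  -- g - h constant
  have hconst : ∀ x y : ℝ, g x - h x = g y - h y := by
    intro x y
    have hdiff : Differentiable ℝ (fun x => g x - h x) :=
      fun x => ((hgd x).sub (hhd x)).differentiableAt
    have hzero : ∀ x, deriv (fun x => g x - h x) x = 0 := fun x => by
      rw [show deriv (fun x => g x - h x) x = _ from ((hgd x).sub (hhd x)).deriv]; ring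
    exact is_const_of_deriv_eq_zero hdiff hzero x y
  -- limits at -infty
  have hgl : Filter.Tendsto g atBot (nhds 0) := by
    rw [show (0:ℝ) = ∫ z : ℝ, (0:ℝ) by simp]
    refine MeasureTheory.tendsto_integral_filter_of_dominated_convergence phi ?_ ?_
      integrable_phi ?_
    · exact Filter.Eventually.of_forall fun x => Continuous.aestronglyMeasurable
        (continuous_phi.mul (continuous_Phi.comp (by continuity)))
    · exact Filter.Eventually.of_forall fun x => Filter.Eventually.of_forall fun z => by
        rw [Real.norm_eq_abs, abs_of_nonneg (mul_nonneg (phi_nonneg z) (Phi_nonneg _))]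
        calc phi z * Phi (x + b*z) ≤ phi z * 1 :=
              mul_le_mul_of_nonneg_left (Phi_le_one _) (phi_nonneg z)
          _ = phi z := mul_one _
    · refine Filter.Eventually.of_forall fun z => ?_
      have h1 : Filter.Tendsto (fun x : ℝ => x + b*z) atBot atBot :=
        Filter.tendsto_atBot_add_const_right _ _ Filter.tendsto_id
      have h2 := tendsto_Phi_atBot.comp h1
      simpa using h2.const_mul (phi z)
  have hhl : Filter.Tendsto h atBot (nhds 0) := by
    refine tendsto_Phi_atBot.comp ?_
    exact Filter.Tendsto.atBot_div_const hsk Filter.tendsto_id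
  -- conclude
  have hdl : Filter.Tendsto (fun x => g x - h x) atBot (nhds (g a - h a)) := by
    refine Filter.Tendsto.congr (fun x => (hconst a x)) tendsto_const_nhds
  have hdl0 : Filter.Tendsto (fun x => g x - h x) atBot (nhds 0) := by
    simpa using hgl.sub hhl
  have := tendsto_nhds_unique hdl hdl0
  have : g a = h a := by linarith
  exact this

end Part4

section Part5

lemma phi_eq (z : ℝ) : phi z = Real.exp (-(1/2 : ℝ) * z^2) / Real.sqrt (2*Real.pi) := by
  rw [phi]
  congr 1
  ring_nf

lemma integrable_sq_mul_phi : Integrable (fun z : ℝ => z^2 * phi z) := by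
  refine ((integrable_sq_mul_exp_k one_pos).div_const (Real.sqrt (2*Real.pi))).congr
    (Filter.Eventually.of_forall fun z => ?_)
  simp only [phi_eq]
  ring

lemma integrable_mul_phi : Integrable (fun z : ℝ => z * phi z) := by
  refine ((integrable_mul_exp_k one_pos).div_const (Real.sqrt (2*Real.pi))).congr
    (Filter.Eventually.of_forall fun z => ?_)
  simp only [phi_eq]
  ring

lemma integrable_sq_phi_mul_Phi (a b : ℝ) :
    Integrable (fun z : ℝ => z^2 * (phi z * Phi (a + b*z))) := by
  refine integrable_sq_mul_phi.mono
    (Continuous.aestronglyMeasurable (by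
      exact (continuous_pow 2).mul (continuous_phi.mul (continuous_Phi.comp (by continuity)))))
    (Filter.Eventually.of_forall fun z => ?_)
  rw [Real.norm_eq_abs, Real.norm_eq_abs,
    abs_of_nonneg (mul_nonneg (sq_nonneg z) (mul_nonneg (phi_nonneg _) (Phi_nonneg _))),
    abs_of_nonneg (mul_nonneg (sq_nonneg z) (phi_nonneg _))]
  calc z^2 * (phi z * Phi (a+b*z)) ≤ z^2 * (phi z * 1) := by
        refine mul_le_mul_of_nonneg_left ?_ (sq_nonneg z)
        exact mul_le_mul_of_nonneg_left (Phi_le_one _) (phi_nonneg z)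
    _ = z^2 * phi z := by ring

lemma integrable_mul_phi_mul_phi (a b : ℝ) :
    Integrable (fun z : ℝ => z * (phi z * phi (a + b*z))) := by
  refine ((integrable_mul_phi.abs).const_mul ((Real.sqrt (2*Real.pi))⁻¹)).mono'
    (Continuous.aestronglyMeasurable (by
      exact continuous_id.mul (continuous_phi.mul (continuous_phi.comp (by continuity)))))
    (Filter.Eventually.of_forall fun z => ?_)
  rw [Real.norm_eq_abs, abs_mul, abs_mul, abs_of_nonneg (phi_nonneg z),
    abs_of_nonneg (phi_nonneg _)]
  calc |z| * (phi z * phi (a+b*z)) ≤ |z| * (phi z * (Real.sqrt (2*Real.pi))⁻¹) := by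
        refine mul_le_mul_of_nonneg_left ?_ (abs_nonneg z)
        exact mul_le_mul_of_nonneg_left (phi_le _) (phi_nonneg z)
    _ = (Real.sqrt (2*Real.pi))⁻¹ * |z * phi z| := by
        rw [abs_mul, abs_of_nonneg (phi_nonneg z)]; ring

lemma integral_mul_phi_mul_phi (a b : ℝ) :
    ∫ z : ℝ, z * (phi z * phi (a + b*z))
      = -(a*b/(1+b^2)) * (phi (a / Real.sqrt (1+b^2)) / Real.sqrt (1+b^2)) := by
  have hk : (0:ℝ) < 1 + b^2 := k_pos b
  have h1 : ∀ z : ℝ, z * (phi z * phi (a + b*z))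
      = (phi (a / Real.sqrt (1+b^2)) * (Real.sqrt (2*Real.pi))⁻¹)
        * (z * Real.exp (-((1+b^2)/2) * (z + a*b/(1+b^2))^2)) := by
    intro z
    rw [gauss_prod a b z]
    ring
  rw [MeasureTheory.integral_congr_ae (Filter.Eventually.of_forall h1),
    MeasureTheory.integral_const_mul, integral_mul_exp_shift hk (a*b/(1+b^2)),
    Real.sqrt_div (by positivity : (0:ℝ) ≤ 2*Real.pi) (1+b^2)]
  have hs : Real.sqrt (2*Real.pi) ≠ 0 := ne_of_gt sqrt2pi_pos
  field_simp

lemma integral_sq_phi_mul_Phi (a b : ℝ) :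
    ∫ z : ℝ, z^2 * (phi z * Phi (a + b*z))
      = Phi (a / Real.sqrt (1+b^2))
        - (b^2 / (1+b^2)) * (a / Real.sqrt (1+b^2)) * phi (a / Real.sqrt (1+b^2)) := by
  have hk : (0:ℝ) < 1 + b^2 := k_pos b
  have hsk : (0:ℝ) < Real.sqrt (1+b^2) := sqrt_k_pos b
  set G : ℝ → ℝ := fun z => -z * phi z * Phi (a + b*z) with hG
  set G' : ℝ → ℝ := fun z => z^2 * (phi z * Phi (a + b*z)) - phi z * Phi (a + b*z)
    - b * (z * (phi z * phi (a + b*z))) with hG'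
  have hderiv : ∀ z : ℝ, HasDerivAt G (G' z) z := by
    intro z
    have h1 : HasDerivAt (fun z : ℝ => -z * phi z) ((z^2 - 1) * phi z) z := by
      have := ((hasDerivAt_id z).fun_neg).fun_mul (hasDerivAt_phi z)
      refine this.congr_deriv ?_
      simp only [id_eq]
      ring
    have h2 : HasDerivAt (fun z : ℝ => Phi (a + b*z)) (b * phi (a + b*z)) z := by
      have hl : HasDerivAt (fun z : ℝ => a + b*z) b z := by
        simpa using ((hasDerivAt_id z).const_mul b).const_add a
      have := (hasDerivAt_Phi (a + b*z)).comp z hl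
      simpa [mul_comm, Function.comp_def] using this
    have := h1.fun_mul h2
    refine this.congr_deriv ?_
    simp only [hG', id_eq]
    ring
  have hint : Integrable G' :=
    ((integrable_sq_phi_mul_Phi a b).sub (integrable_phi_mul_Phi a b)).sub
      ((integrable_mul_phi_mul_phi a b).const_mul b)
  have hbound : ∀ z : ℝ, ‖G z‖ ≤ ((Real.sqrt (2*Real.pi))⁻¹ * ((2 * Real.sqrt ((1:ℝ)/4))⁻¹))
      * Real.exp (-((1:ℝ)/4) * z^2) := by
    intro z
    have h3 : |G z| = |z| * phi z * Phi (a+b*z) := by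
      rw [hG]
      simp only [abs_mul, abs_neg, abs_of_nonneg (phi_nonneg z), abs_of_nonneg (Phi_nonneg _)]
    rw [Real.norm_eq_abs, h3]
    have h4 : |z| * phi z * Phi (a+b*z) ≤ |z| * phi z * 1 :=
      mul_le_mul_of_nonneg_left (Phi_le_one _) (mul_nonneg (abs_nonneg z) (phi_nonneg z))
    have h5 : |z| * phi z = |z * Real.exp (-((1:ℝ)/2) * z^2)| * (Real.sqrt (2*Real.pi))⁻¹ := by
      rw [abs_mul, abs_of_nonneg (Real.exp_nonneg _), phi_eq, div_eq_mul_inv]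
      ring
    have h6 := abs_mul_exp_le one_pos z
    calc |z| * phi z * Phi (a+b*z) ≤ |z| * phi z * 1 := h4
      _ = |z * Real.exp (-((1:ℝ)/2) * z^2)| * (Real.sqrt (2*Real.pi))⁻¹ := by rw [mul_one, h5]
      _ ≤ ((2 * Real.sqrt ((1:ℝ)/4))⁻¹ * Real.exp (-((1:ℝ)/4) * z^2))
            * (Real.sqrt (2*Real.pi))⁻¹ := by
          refine mul_le_mul_of_nonneg_right ?_ (inv_nonneg.2 sqrt2pi_pos.le)
          simpa using h6
      _ = ((Real.sqrt (2*Real.pi))⁻¹ * ((2 * Real.sqrt ((1:ℝ)/4))⁻¹))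
            * Real.exp (-((1:ℝ)/4) * z^2) := by ring
  have htop : Filter.Tendsto G atTop (nhds 0) := by
    refine squeeze_zero_norm hbound ?_
    simpa using (tendsto_exp_k_atTop one_pos).const_mul
      ((Real.sqrt (2*Real.pi))⁻¹ * ((2 * Real.sqrt ((1:ℝ)/4))⁻¹))
  have hbot : Filter.Tendsto G atBot (nhds 0) := by
    refine squeeze_zero_norm hbound ?_
    simpa using (tendsto_exp_k_atBot one_pos).const_mul
      ((Real.sqrt (2*Real.pi))⁻¹ * ((2 * Real.sqrt ((1:ℝ)/4))⁻¹))
  have h0 : ∫ z, G' z = 0 - 0 :=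
    MeasureTheory.integral_of_hasDerivAt_of_tendsto hderiv hint hbot htop
  rw [sub_zero] at h0
  have hsplit : ∫ z, G' z = (∫ z : ℝ, z^2 * (phi z * Phi (a + b*z)))
      - (∫ z : ℝ, phi z * Phi (a + b*z))
      - b * ∫ z : ℝ, z * (phi z * phi (a + b*z)) := by
    rw [hG']
    rw [MeasureTheory.integral_sub
      (f := fun z : ℝ => z^2 * (phi z * Phi (a + b*z)) - phi z * Phi (a + b*z))
      (g := fun z : ℝ => b * (z * (phi z * phi (a + b*z))))
      (by exact (integrable_sq_phi_mul_Phi a b).sub (integrable_phi_mul_Phi a b))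
      ((integrable_mul_phi_mul_phi a b).const_mul b),
      MeasureTheory.integral_sub (integrable_sq_phi_mul_Phi a b) (integrable_phi_mul_Phi a b),
      MeasureTheory.integral_const_mul]
  rw [hsplit, integral_phi_mul_Phi a b, integral_mul_phi_mul_phi a b] at h0
  have hc : a / Real.sqrt (1+b^2) / (1+b^2) = a / (1+b^2) / Real.sqrt (1+b^2) := by
    ring
  have : (∫ z : ℝ, z^2 * (phi z * Phi (a + b*z)))
      = Phi (a / Real.sqrt (1+b^2))
        + b * (-(a*b/(1+b^2)) * (phi (a / Real.sqrt (1+b^2)) / Real.sqrt (1+b^2))) := by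
    linarith
  rw [this]
  field_simp
  ring

end Part5


theorem GH_conditional_second_moment (μ₁ μ₂ σ ρ : ℝ) (hσ : 0 < σ) (hρ₁ : -1 < ρ) (hρ₂ : ρ < 1)
    (z ζ : ℝ → ℝ)
    (hz : ∀ y, z y = (y - μ₁) / σ)
    (hζ : ∀ y, ζ y = (μ₂ + ρ * z y) / Real.sqrt (1 - ρ ^ 2)) :
    (∫ y : ℝ, z y ^ 2 * ((1 / (σ * Phi μ₂)) * phi (z y) * Phi (ζ y)))
      = 1 - μ₂ * ρ ^ 2 * phi μ₂ / Phi μ₂ := by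
  have hρsq : ρ^2 < 1 := by nlinarith
  have h1ρ : (0:ℝ) < 1 - ρ^2 := by linarith
  set s : ℝ := Real.sqrt (1 - ρ^2) with hs
  have hs_pos : 0 < s := Real.sqrt_pos.2 h1ρ
  have hs_sq : s^2 = 1 - ρ^2 := Real.sq_sqrt h1ρ.le
  set a : ℝ := μ₂ / s with ha
  set b : ℝ := ρ / s with hb
  have hkb : 1 + b^2 = (1/s)^2 := by
    rw [hb]
    field_simp
    nlinarith [hs_sq]
  have hsqrtk : Real.sqrt (1 + b^2) = 1/s := by
    rw [hkb, Real.sqrt_sq (by positivity)]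
  have hc : a / Real.sqrt (1 + b^2) = μ₂ := by
    rw [hsqrtk, ha]
    field_simp
  have hb2k : b^2 / (1 + b^2) = ρ^2 := by
    rw [hkb, hb]
    field_simp
  have hζ' : ∀ y, ζ y = a + b * z y := by
    intro y
    rw [hζ, ha, hb]
    field_simp
  set g : ℝ → ℝ := fun t => t^2 * (phi t * Phi (a + b*t)) with hg
  have hint1 : ∀ y : ℝ, z y ^ 2 * ((1 / (σ * Phi μ₂)) * phi (z y) * Phi (ζ y))
      = (1 / (σ * Phi μ₂)) * g ((y - μ₁)/σ) := by
    intro y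
    rw [hg, hζ' y, hz y]
    ring
  rw [MeasureTheory.integral_congr_ae (Filter.Eventually.of_forall hint1),
    MeasureTheory.integral_const_mul]
  have hshift : (∫ y : ℝ, g ((y - μ₁)/σ)) = ∫ x : ℝ, g (x/σ) := by
    exact MeasureTheory.integral_sub_right_eq_self (fun x => g (x/σ)) μ₁
  have hdiv : (∫ x : ℝ, g (x/σ)) = |σ| • ∫ t, g t :=
    MeasureTheory.Measure.integral_comp_div g σ
  have hgval : (∫ t, g t) = Phi μ₂ - ρ^2 * μ₂ * phi μ₂ := by
    rw [hg]
    rw [integral_sq_phi_mul_Phi a b, hc, hb2k]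
    try ring
  rw [hshift, hdiv, hgval, abs_of_pos hσ]
  have hΦ : Phi μ₂ ≠ 0 := ne_of_gt (Phi_pos μ₂)
  have hσ' : σ ≠ 0 := ne_of_gt hσ
  rw [smul_eq_mul]
  field_simp
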